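/- Let G be a countable group acting continuously on a compact metric space X, and let μ be a probability measure on G whose support S is finite and generates G. Assume (i) μ is evenly distributed: for all n, m ∈ ℕ there is μ_{n,m} ∈ [0,1] such that μ^{*n}({g}) = μ_{n,m} for every g ∈ G with ‖g‖_S = m; and (ii) the action of G on X converges in word metric to the space average of a Borel probability measure ν: for every continuous f : X → ℝ and every x ∈ X, lim_{n→∞} (1/|G_n|) Σ_{g ∈ G_n} f(gx) = ∫_X f dν. Then ν is μ-stationary: μ * ν = ν. -/

import Mathlib

open MeasureTheory Filter Topology

noncomputable section

namespace RWalk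

variable {G : Type*} [Group G] [MeasurableSpace G]

/-- The `n`-fold convolution power of a measure on a group, with `μ^{*0} = δ_e`. -/
def convPow (μ : Measure G) : ℕ → Measure G
  | 0 => Measure.dirac 1
  | n + 1 => (convPow μ n).mconv μ

/-- The word length of `g` with respect to a generating set `S`:
`‖g‖_S = min {n | g = s₁ ⋯ s_n, sᵢ ∈ S}`. -/
def wordLen (S : Set G) (g : G) : ℕ :=
  sInf {n | ∃ l : List G, l.length = n ∧ (∀ s ∈ l, s ∈ S) ∧ l.prod = g}

/-- Convolution `μ * ν` of a measure `μ` on `G` with a measure `ν` on a `G`-space `X`: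
the pushforward of `μ ⊗ ν` under the action map `(g,x) ↦ g • x`. -/
def actConv {X : Type*} [MeasurableSpace X] [MulAction G X]
    (μ : Measure G) (ν : Measure X) : Measure X :=
  Measure.map (fun p : G × X => p.1 • p.2) (μ.prod ν)

end RWalk

open RWalk

section Helpers

lemma measurable_discrete' {α β : Type*} [Countable α] [MeasurableSpace α]
    [MeasurableSingletonClass α] [MeasurableSpace β] (f : α → β) : Measurable f :=
  fun _ _ => (Set.to_countable _).measurableSet

variable {G : Type*} [Group G] [Countable G] [MeasurableSpace G] [MeasurableSingletonClass G]

lemma measure_eq_tsum' (ρ : Measure G) (s : Set G) : ρ s = ∑' g : s, ρ {(g : G)} := by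
  conv_lhs => rw [show s = ⋃ g ∈ s, {g} by simp]
  rw [measure_biUnion s.to_countable ?_ fun b _ => measurableSet_singleton b]
  intro a _ b _ hab
  simp [Function.onFun, Set.disjoint_singleton, hab]

lemma convPow_prob (μ : Measure G) [IsProbabilityMeasure μ] (n : ℕ) :
    IsProbabilityMeasure (convPow μ n) := by
  induction n with
  | zero => exact Measure.dirac.isProbabilityMeasure
  | succ n ih =>
    haveI := ih
    haveI : MeasurableMul₂ G := ⟨measurable_discrete' _⟩
    show IsProbabilityMeasure ((convPow μ n).mconv μ)
    infer_instance

lemma convPow_succ_apply (μ : Measure G) [IsProbabilityMeasure μ] (n : ℕ) (g : G) :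
    convPow μ (n + 1) {g} = ∑' k : G, convPow μ n {g * k⁻¹} * μ {k} := by
  haveI := convPow_prob μ n
  show ((convPow μ n).mconv μ) {g} = _
  rw [Measure.mconv, Measure.map_apply (measurable_discrete' _) (measurableSet_singleton g),
      Measure.prod_apply ((Set.to_countable _).measurableSet)]
  have h1 : ∀ a : G, (Prod.mk a ⁻¹' ((fun x : G × G => x.1 * x.2) ⁻¹' {g})) = {a⁻¹ * g} := by
    intro a; ext b
    simp [eq_comm, eq_inv_mul_iff_mul_eq]
  simp_rw [h1]
  rw [lintegral_countable' (fun a => μ {a⁻¹ * g})]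
  refine (Equiv.tsum_eq (Equiv.mk (fun k : G => g * k⁻¹) (fun a => a⁻¹ * g) ?_ ?_) _).symm.trans ?_
  · intro k; group
  · intro a; group
  · simp only [Equiv.coe_fn_mk]
    refine tsum_congr fun k => ?_
    have h2 : (g * k⁻¹)⁻¹ * g = k := by group
    rw [h2, mul_comm]

lemma convPow_succ_apply_left (μ : Measure G) [IsProbabilityMeasure μ] (n : ℕ) (g : G) :
    convPow μ (n + 1) {g} = ∑' k : G, μ {k} * convPow μ n {k⁻¹ * g} := by
  induction n generalizing g with
  | zero =>
    rw [convPow_succ_apply]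
    have h0 : ∀ h : G, h ≠ 1 → (convPow μ 0) {h} = 0 := by
      intro h hh
      show Measure.dirac 1 {h} = 0
      rw [Measure.dirac_apply' _ (measurableSet_singleton h)]
      simp [Set.indicator_apply, Ne.symm hh]
    have h0e : (convPow μ 0) {(1 : G)} = 1 := by
      show Measure.dirac 1 {(1 : G)} = 1
      rw [Measure.dirac_apply' _ (measurableSet_singleton _)]
      simp
    have hL : ∑' k : G, convPow μ 0 {g * k⁻¹} * μ {k} = μ {g} := by
      rw [tsum_eq_single g]
      · rw [show g * g⁻¹ = 1 by group, h0e, one_mul]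
      · intro k hk
        rw [h0 _ (by rw [Ne, mul_inv_eq_one]; exact fun h => hk h.symm), zero_mul]
    have hR : ∑' k : G, μ {k} * convPow μ 0 {k⁻¹ * g} = μ {g} := by
      rw [tsum_eq_single g]
      · rw [show g⁻¹ * g = 1 by group, h0e, mul_one]
      · intro k hk
        rw [h0 _ (by rw [Ne, inv_mul_eq_one]; exact hk), mul_zero]
    rw [hL, hR]
  | succ n ih =>
    rw [convPow_succ_apply]
    have h1 : ∀ k : G, convPow μ (n + 1) {g * k⁻¹} * μ {k}
        = ∑' j : G, μ {j} * (convPow μ n {j⁻¹ * g * k⁻¹} * μ {k}) := by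
      intro k
      rw [ih, ← ENNReal.tsum_mul_right]
      refine tsum_congr fun j => ?_
      rw [mul_assoc, mul_assoc]
    calc ∑' k : G, convPow μ (n + 1) {g * k⁻¹} * μ {k}
        = ∑' k : G, ∑' j : G, μ {j} * (convPow μ n {j⁻¹ * g * k⁻¹} * μ {k}) := tsum_congr h1
      _ = ∑' j : G, ∑' k : G, μ {j} * (convPow μ n {j⁻¹ * g * k⁻¹} * μ {k}) := ENNReal.tsum_comm
      _ = ∑' j : G, μ {j} * convPow μ (n + 1) {j⁻¹ * g} := by
          refine tsum_congr fun j => ?_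
          rw [ENNReal.tsum_mul_left]
          congr 1
          rw [convPow_succ_apply]

lemma tsum_convPow_eq_one (μ : Measure G) [IsProbabilityMeasure μ] (n : ℕ) :
    ∑' g : G, convPow μ n {g} = 1 := by
  haveI := convPow_prob μ n
  have := measure_eq_tsum' (convPow μ n) Set.univ
  rw [measure_univ] at this
  rw [← tsum_univ (fun g : G => convPow μ n {g})]
  exact this.symm

end Helpers
section PartB

variable {G : Type*} [Group G] [Countable G] [MeasurableSpace G] [MeasurableSingletonClass G]

lemma convPow_le_one (μ : Measure G) [IsProbabilityMeasure μ] (n : ℕ) (g : G) :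
    convPow μ n {g} ≤ 1 := by
  haveI := convPow_prob μ n
  exact prob_le_one

lemma convPow_succ_real (μ : Measure G) [IsProbabilityMeasure μ] (S : Finset G)
    (hsupp : ∀ g : G, μ {g} ≠ 0 ↔ g ∈ S) (n : ℕ) (g : G) :
    (convPow μ (n + 1) {g}).toReal
      = ∑ k ∈ S, (μ {k}).toReal * (convPow μ n {g * k⁻¹}).toReal := by
  rw [convPow_succ_apply, tsum_eq_sum (s := S) (fun k hk => by
      have h0 : μ {k} = 0 := by
        by_contra h
        exact hk ((hsupp k).mp h)
      rw [h0, mul_zero])]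
  rw [ENNReal.toReal_sum (fun k _ => ENNReal.mul_ne_top
      (lt_of_le_of_lt (convPow_le_one μ n _) ENNReal.one_lt_top).ne (measure_ne_top μ _))]
  refine Finset.sum_congr rfl fun k _ => ?_
  rw [ENNReal.toReal_mul, mul_comm]

lemma convPow_succ_real_left (μ : Measure G) [IsProbabilityMeasure μ] (S : Finset G)
    (hsupp : ∀ g : G, μ {g} ≠ 0 ↔ g ∈ S) (n : ℕ) (g : G) :
    (convPow μ (n + 1) {g}).toReal
      = ∑ k ∈ S, (μ {k}).toReal * (convPow μ n {k⁻¹ * g}).toReal := by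
  rw [convPow_succ_apply_left, tsum_eq_sum (s := S) (fun k hk => by
      have h0 : μ {k} = 0 := by
        by_contra h
        exact hk ((hsupp k).mp h)
      rw [h0, zero_mul])]
  rw [ENNReal.toReal_sum (fun k _ => ENNReal.mul_ne_top (measure_ne_top μ _)
      (lt_of_le_of_lt (convPow_le_one μ n _) ENNReal.one_lt_top).ne)]
  refine Finset.sum_congr rfl fun k _ => ?_
  rw [ENNReal.toReal_mul]

lemma sum_p_eq_one (μ : Measure G) [IsProbabilityMeasure μ] (S : Finset G)
    (hsupp : ∀ g : G, μ {g} ≠ 0 ↔ g ∈ S) :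
    ∑ k ∈ S, (μ {k}).toReal = 1 := by
  have h1 : ∑' g : G, μ {g} = 1 := by
    have := measure_eq_tsum' μ Set.univ
    rw [measure_univ] at this
    rw [← tsum_univ (fun g : G => μ {g})]
    exact this.symm
  have h2 : ∑ k ∈ S, μ {k} = 1 := by
    rw [← h1, tsum_eq_sum (s := S)]
    intro k hk
    by_contra h
    exact hk ((hsupp k).mp h)
  have h3 := congrArg ENNReal.toReal h2
  rw [ENNReal.toReal_sum (fun k _ => measure_ne_top μ _)] at h3
  simpa using h3

lemma convPow_mem_closure (μ : Measure G) [IsProbabilityMeasure μ] (S : Finset G)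
    (hsupp : ∀ g : G, μ {g} ≠ 0 ↔ g ∈ S) (n : ℕ) (g : G)
    (h : convPow μ n {g} ≠ 0) : g ∈ Submonoid.closure (S : Set G) := by
  induction n generalizing g with
  | zero =>
    have hg : g = 1 := by
      by_contra hg
      apply h
      show Measure.dirac 1 {g} = 0
      rw [Measure.dirac_apply' _ (measurableSet_singleton g)]
      simp [Set.indicator_apply, Ne.symm hg]
    rw [hg]; exact one_mem _
  | succ n ih =>
    rw [convPow_succ_apply] at h
    have : ∃ k : G, convPow μ n {g * k⁻¹} * μ {k} ≠ 0 := by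
      by_contra hall
      push_neg at hall
      exact h (by simp [hall])
    obtain ⟨k, hk⟩ := this
    have h1 : convPow μ n {g * k⁻¹} ≠ 0 := fun h0 => hk (by rw [h0, zero_mul])
    have h2 : μ {k} ≠ 0 := fun h0 => hk (by rw [h0, mul_zero])
    have hkS : k ∈ Submonoid.closure (S : Set G) :=
      Submonoid.subset_closure ((hsupp k).mp h2)
    have := mul_mem (ih _ h1) hkS
    simpa using this

end PartB
section PartC

variable {G : Type*} [Group G] [Countable G] [MeasurableSpace G] [MeasurableSingletonClass G]

lemma cesaro_vanish (μ : Measure G) [IsProbabilityMeasure μ] (S : Finset G)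
    (hsupp : ∀ g : G, μ {g} ≠ 0 ↔ g ∈ S)
    (hinf : ((Submonoid.closure (S : Set G) : Submonoid G) : Set G).Infinite) (g₀ : G) :
    Tendsto (fun N : ℕ => (∑ n ∈ Finset.range N, (convPow μ n {g₀}).toReal) / N)
      atTop (𝓝 0) := by
  classical
  set q : ℕ → G → ℝ := fun n g => (convPow μ n {g}).toReal with hqdef
  set v : ℕ → G → ℝ := fun N g => (∑ n ∈ Finset.range N, q n g) / N with hvdef
  have hq0 : ∀ n g, 0 ≤ q n g := fun n g => ENNReal.toReal_nonneg
  have hq1 : ∀ n g, q n g ≤ 1 := by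
    intro n g
    have h := ENNReal.toReal_mono (by simp) (convPow_le_one μ n g)
    exact le_trans h (by norm_num)
  have hv0 : ∀ N g, 0 ≤ v N g := fun N g =>
    div_nonneg (Finset.sum_nonneg fun n _ => hq0 n g) (Nat.cast_nonneg N)
  have hFq : ∀ (F : Finset G) (n : ℕ), ∑ k ∈ F, q n k ≤ 1 := by
    intro F n
    haveI := convPow_prob μ n
    have h1 : ∑ k ∈ F, convPow μ n {k} = convPow μ n (↑F) := by
      rw [← measure_biUnion_finset ?_ fun (k : G) (_ : k ∈ F) => measurableSet_singleton k]
      · congr 1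
        ext x
        simp
      · intro a _ b _ hab
        simp [Function.onFun, Set.disjoint_singleton, hab]
    have h2 : (∑ k ∈ F, convPow μ n {k}).toReal ≤ 1 := by
      rw [h1]
      have h := ENNReal.toReal_mono (by simp) (prob_le_one (μ := convPow μ n) (s := ↑F))
      exact le_trans h (by norm_num)
    rwa [ENNReal.toReal_sum (fun k _ => measure_ne_top _ _)] at h2
  have hvF : ∀ (F : Finset G) (N : ℕ), ∑ k ∈ F, v N k ≤ 1 := by
    intro F N
    rcases Nat.eq_zero_or_pos N with h | h
    · simp [hvdef, h]
    · rw [show ∑ k ∈ F, v N k = (∑ k ∈ F, ∑ n ∈ Finset.range N, q n k) / N by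
        rw [Finset.sum_div]]
      rw [div_le_one (by exact_mod_cast h)]
      rw [Finset.sum_comm]
      calc ∑ n ∈ Finset.range N, ∑ k ∈ F, q n k
          ≤ ∑ n ∈ Finset.range N, 1 := Finset.sum_le_sum fun n _ => hFq F n
        _ = N := by simp
  have hrec : ∀ n g, q (n + 1) g = ∑ k ∈ S, (μ {k}).toReal * q n (g * k⁻¹) :=
    fun n g => convPow_succ_real μ S hsupp n g
  have hiden : ∀ g N, ∑ k ∈ S, (μ {k}).toReal * v N (g * k⁻¹)
      = v N g + (q N g - q 0 g) / N := by
    intro g N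
    have hshift : ∑ n ∈ Finset.range N, q (n + 1) g
        = ∑ n ∈ Finset.range N, q n g + q N g - q 0 g := by
      have h1 := Finset.sum_range_succ' (fun n => q n g) N
      have h2 := Finset.sum_range_succ (fun n => q n g) N
      linarith
    calc ∑ k ∈ S, (μ {k}).toReal * v N (g * k⁻¹)
        = (∑ k ∈ S, (μ {k}).toReal * ∑ n ∈ Finset.range N, q n (g * k⁻¹)) / N := by
          rw [Finset.sum_div]
          exact Finset.sum_congr rfl fun k _ => (mul_div_assoc _ _ _).symm
      _ = (∑ n ∈ Finset.range N, ∑ k ∈ S, (μ {k}).toReal * q n (g * k⁻¹)) / N := by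
          congr 1
          rw [show (∑ k ∈ S, (μ {k}).toReal * ∑ n ∈ Finset.range N, q n (g * k⁻¹))
              = ∑ k ∈ S, ∑ n ∈ Finset.range N, (μ {k}).toReal * q n (g * k⁻¹) from
            Finset.sum_congr rfl fun k _ => Finset.mul_sum _ _ _, Finset.sum_comm]
      _ = (∑ n ∈ Finset.range N, q (n + 1) g) / N := by
          congr 1
          exact Finset.sum_congr rfl fun n _ => (hrec n g).symm
      _ = (∑ n ∈ Finset.range N, q n g + (q N g - q 0 g)) / N := by rw [hshift]; ring_nf
      _ = v N g + (q N g - q 0 g) / N := by rw [add_div]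
  rw [tendsto_iff_ultrafilter]
  intro U hU
  have hLim : ∀ g : G, ∃ L ∈ Set.Icc (0 : ℝ) 1, Tendsto (fun N => v N g) U (𝓝 L) := by
    intro g
    have hmem : ↑(U.map fun N => v N g) ≤ Filter.principal (Set.Icc (0 : ℝ) 1) := by
      rw [Filter.le_principal_iff]
      exact Filter.mem_map.mpr (Filter.univ_mem' fun N => by
        constructor
        · exact hv0 N g
        · rcases Nat.eq_zero_or_pos N with h | h
          · simp [hvdef, h]
          · rw [hvdef]
            simp only
            rw [div_le_one (by exact_mod_cast h)]
            calc ∑ n ∈ Finset.range N, q n g ≤ ∑ n ∈ Finset.range N, 1 :=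
                  Finset.sum_le_sum fun n _ => hq1 n g
              _ = N := by simp)
    obtain ⟨L, hL, h2⟩ := (isCompact_Icc (a := (0:ℝ)) (b := 1)).ultrafilter_le_nhds
      (Ultrafilter.map (fun N => v N g) U) hmem
    exact ⟨L, hL, h2⟩
  choose L hL0 hL using hLim
  have hp0 : ∀ k ∈ S, 0 < (μ {k}).toReal := by
    intro k hk
    exact ENNReal.toReal_pos ((hsupp k).mpr hk) (measure_ne_top μ _)
  have hLrec : ∀ g, L g = ∑ k ∈ S, (μ {k}).toReal * L (g * k⁻¹) := by
    intro g
    have t1 : Tendsto (fun N => ∑ k ∈ S, (μ {k}).toReal * v N (g * k⁻¹)) U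
        (𝓝 (∑ k ∈ S, (μ {k}).toReal * L (g * k⁻¹))) :=
      tendsto_finset_sum _ fun k _ => (hL _).const_mul _
    have t2 : Tendsto (fun N : ℕ => (q N g - q 0 g) / N) U (𝓝 0) := by
      refine squeeze_zero_norm (fun N => ?_)
        ((tendsto_const_div_atTop_nhds_zero_nat 2).mono_left hU)
      rcases Nat.eq_zero_or_pos N with h | h
      · simp [h]
      · have hNpos : (0 : ℝ) < N := by exact_mod_cast h
        have hb : |q N g - q 0 g| ≤ 2 := by
          have h1 := hq0 N g; have h2 := hq1 N g
          have h3 := hq0 0 g; have h4 := hq1 0 g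
          rw [abs_le]; constructor <;> linarith
        rw [Real.norm_eq_abs, abs_div, Nat.abs_cast]
        gcongr
    have t3 : Tendsto (fun N => v N g + (q N g - q 0 g) / N) U (𝓝 (L g + 0)) :=
      (hL g).add t2
    rw [add_zero] at t3
    have t4 : (fun N => ∑ k ∈ S, (μ {k}).toReal * v N (g * k⁻¹))
        = fun N => v N g + (q N g - q 0 g) / N := funext fun N => hiden g N
    rw [t4] at t1
    exact tendsto_nhds_unique t3 t1
  have hLsum : ∀ F : Finset G, ∑ k ∈ F, L k ≤ 1 := by
    intro F
    have t : Tendsto (fun N => ∑ k ∈ F, v N k) U (𝓝 (∑ k ∈ F, L k)) :=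
      tendsto_finset_sum _ fun k _ => hL k
    exact le_of_tendsto t (Filter.Eventually.of_forall fun N => hvF F N)
  have hLzero : ∀ g, L g = 0 := by
    by_contra hne
    push_neg at hne
    obtain ⟨g', hg'⟩ := hne
    have hg'pos : 0 < L g' := lt_of_le_of_ne (hL0 g').1 (Ne.symm hg')
    have hBfin : {g : G | L g' / 2 < L g}.Finite := by
      by_contra hBinf
      have hBinf : {g : G | L g' / 2 < L g}.Infinite := hBinf
      obtain ⟨F, hFsub, hFcard⟩ := hBinf.exists_subset_card_eq (⌈2 / L g'⌉₊ + 1)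
      have hFne : F.Nonempty := by
        rw [← Finset.card_pos, hFcard]; omega
      have h1 : (F.card : ℝ) * (L g' / 2) < ∑ k ∈ F, L k := by
        have := Finset.sum_lt_sum_of_nonempty hFne
          (f := fun _ => L g' / 2) (g := L) (fun k hk => hFsub hk)
        simpa [Finset.sum_const, nsmul_eq_mul] using this
      have h2 : 1 < (F.card : ℝ) * (L g' / 2) := by
        rw [hFcard]
        push_cast
        have hceil : (2 / L g' : ℝ) ≤ (⌈2 / L g'⌉₊ : ℝ) := Nat.le_ceil _
        have hmul : (2 / L g' : ℝ) * (L g' / 2) = 1 := by field_simp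
        nlinarith [hg'pos]
      linarith [hLsum F]
    have hBne : g' ∈ {g : G | L g' / 2 < L g} := by
      simp only [Set.mem_setOf_eq]; linarith
    obtain ⟨gm, hgmB, hgmax'⟩ := hBfin.toFinset.exists_max_image L
      ⟨g', hBfin.mem_toFinset.mpr hBne⟩
    rw [hBfin.mem_toFinset] at hgmB
    have hgm : ∀ g, L g ≤ L gm := by
      intro g
      by_cases hB : L g' / 2 < L g
      · exact hgmax' g (hBfin.mem_toFinset.mpr hB)
      · push_neg at hB
        have : L g' / 2 < L gm := hgmB
        linarith
    have hpsum : ∑ k ∈ S, (μ {k}).toReal = 1 := sum_p_eq_one μ S hsupp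
    have hstep : ∀ g, L g = L gm → ∀ k ∈ S, L (g * k⁻¹) = L gm := by
      intro g hg k hk
      by_contra hne2
      have hlt : L (g * k⁻¹) < L gm := lt_of_le_of_ne (hgm _) hne2
      have hsum : ∑ j ∈ S, (μ {j}).toReal * L (g * j⁻¹)
          < ∑ j ∈ S, (μ {j}).toReal * L gm := by
        refine Finset.sum_lt_sum (fun j hj => ?_) ⟨k, hk, ?_⟩
        · exact mul_le_mul_of_nonneg_left (hgm _) ENNReal.toReal_nonneg
        · exact mul_lt_mul_of_pos_left hlt (hp0 k hk)
      rw [← hLrec g, hg, ← Finset.sum_mul, hpsum, one_mul] at hsum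
      exact lt_irrefl _ hsum
    have hclosure : ∀ t ∈ Submonoid.closure (S : Set G), L (gm * t⁻¹) = L gm := by
      have key : ∀ t ∈ Submonoid.closure (S : Set G),
          ∀ h : G, L h = L gm → L (h * t⁻¹) = L gm := by
        intro t ht
        induction ht using Submonoid.closure_induction with
        | mem x hx => exact fun h hh => hstep h hh x hx
        | one => intro h hh; simpa using hh
        | mul x y hx hy ihx ihy =>
          intro h hh
          rw [mul_inv_rev, ← mul_assoc]
          exact ihx (h * y⁻¹) (ihy h hh)
      exact fun t ht => key t ht gm rfl
    have hAinf : {g : G | L g = L gm}.Infinite := by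
      have himg : (fun t : G => gm * t⁻¹) '' ((Submonoid.closure (S : Set G) : Submonoid G) : Set G)
          ⊆ {g : G | L g = L gm} := by
        rintro _ ⟨t, ht, rfl⟩
        exact hclosure t ht
      refine Set.Infinite.mono himg (Set.Infinite.image ?_ hinf)
      intro a _ b _ hab
      simpa using mul_left_cancel hab
    obtain ⟨F, hFsub, hFcard⟩ := hAinf.exists_subset_card_eq (⌈1 / L g'⌉₊ + 1)
    have hsumF : ∑ k ∈ F, L k = (F.card : ℝ) * L gm := by
      rw [Finset.sum_congr rfl (fun k hk => hFsub hk), Finset.sum_const, nsmul_eq_mul]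
    have hge : L g' ≤ L gm := hgm g'
    have hcard : (1 / L g' : ℝ) < (F.card : ℝ) := by
      rw [hFcard]
      push_cast
      have := Nat.le_ceil (1 / L g' : ℝ)
      linarith
    have : 1 < ∑ k ∈ F, L k := by
      rw [hsumF]
      have h1 : (1 / L g' : ℝ) * L g' = 1 := by field_simp
      nlinarith
    linarith [hLsum F]
  have := hL g₀
  rw [hLzero g₀] at this
  exact this

end PartC
section PartE

variable {G : Type*} [Group G] [Countable G] [MeasurableSpace G] [MeasurableSingletonClass G]
variable {X : Type*} [MulAction G X]

lemma finset_measure_eq_sum (ρ : Measure G) (F : Finset G) :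
    ρ (↑F : Set G) = ∑ k ∈ F, ρ {k} := by
  rw [← measure_biUnion_finset ?_ fun (k : G) (_ : k ∈ F) => measurableSet_singleton k]
  · congr 1
    ext y
    simp
  · intro a _ b _ hab
    simp [Function.onFun, Set.disjoint_singleton, hab]

lemma fiber_bound (ρ : Measure G) [IsFiniteMeasure ρ] (A : Set G) (c : ENNReal)
    (hc : ∀ g ∈ A, ρ {g} = c) (f : X → ℝ) (x : X) (T : ℝ) :
    |(∑' g : A, (ρ {(g : G)}).toReal * f ((g : G) • x)) - (ρ A).toReal * T|
      ≤ (ρ A).toReal * |(∑ᶠ g ∈ A, f (g • x)) / (A.ncard : ℝ) - T| := by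
  classical
  rcases Set.finite_or_infinite A with hfin | hinfA
  · rcases Set.eq_empty_or_nonempty A with hem | hne
    · rw [hem]
      haveI : IsEmpty (↥(∅ : Set G)) := Set.isEmpty_coe_sort.mpr rfl
      simp [tsum_empty, finsum_mem_empty]
    · set F := hfin.toFinset with hF
      have hcoe : (↑F : Set G) = A := hfin.coe_toFinset
      rw [← hcoe]
      rw [Finset.tsum_subtype' F (fun g => (ρ {g}).toReal * f (g • x)),
        finsum_mem_coe_finset, Set.ncard_coe_finset, finset_measure_eq_sum]
      have hmem : ∀ k ∈ F, k ∈ A := fun k hk => hfin.mem_toFinset.mp hk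
      have hcF : ∀ k ∈ F, ρ {k} = c := fun k hk => hc k (hmem k hk)
      have hcne : c ≠ ⊤ := by
        obtain ⟨g0, hg0⟩ := hne
        rw [← hc g0 hg0]
        exact measure_ne_top ρ _
      have hcardpos : 0 < F.card := by
        rw [Finset.card_pos, ← Finset.coe_nonempty, hcoe]
        exact hne
      rw [Finset.sum_congr rfl hcF, Finset.sum_const, nsmul_eq_mul, ENNReal.toReal_mul,
        ENNReal.toReal_natCast]
      have hsum2 : ∑ g ∈ F, (ρ {g}).toReal * f (g • x) = ∑ g ∈ F, c.toReal * f (g • x) :=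
        Finset.sum_congr rfl fun k hk => by rw [hcF k hk]
      rw [hsum2, ← Finset.mul_sum]
      set cr := c.toReal with hcr
      have hcr0 : 0 ≤ cr := ENNReal.toReal_nonneg
      set B := ∑ g ∈ F, f (g • x) with hB
      set nn : ℝ := (F.card : ℝ) with hnn
      have hnn0 : (0 : ℝ) < nn := by rw [hnn]; exact_mod_cast hcardpos
      have hnne : nn ≠ 0 := ne_of_gt hnn0
      have h2 : nn * (B / nn - T) = B - nn * T := by field_simp
      have key : nn * cr * |B / nn - T| = |cr * B - nn * cr * T| := by
        calc nn * cr * |B / nn - T| = cr * (nn * |B / nn - T|) := by ring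
          _ = cr * |nn * (B / nn - T)| := by rw [abs_mul, abs_of_pos hnn0]
          _ = cr * |B - nn * T| := by rw [h2]
          _ = |cr| * |B - nn * T| := by rw [abs_of_nonneg hcr0]
          _ = |cr * (B - nn * T)| := (abs_mul _ _).symm
          _ = |cr * B - nn * cr * T| := by congr 1; ring
      rw [key]
  · have hc0 : c = 0 := by
      by_contra hc0
      have htop : ρ A = ⊤ := by
        rw [measure_eq_tsum' ρ A, tsum_congr (fun g : A => hc (g : G) g.2)]
        haveI := hinfA.to_subtype
        exact ENNReal.tsum_const_eq_top_of_ne_zero hc0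
      exact (measure_ne_top ρ A) htop
    have hs0 : (∑' g : A, (ρ {(g : G)}).toReal * f ((g : G) • x)) = 0 := by
      have hz : ∀ g : A, (ρ {(g : G)}).toReal * f ((g : G) • x) = 0 := fun g => by
        rw [hc (g : G) g.2, hc0]
        simp
      rw [tsum_congr hz]
      exact tsum_zero
    have hw0 : (ρ A).toReal = 0 := by
      rw [measure_eq_tsum' ρ A, tsum_congr (fun g : A => hc (g : G) g.2), hc0]
      simp
    rw [hs0, hw0]
    simp

lemma avg_bound (A : Set G) (f : X → ℝ) (x : X) (C : ℝ) (hC0 : 0 ≤ C)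
    (hC : ∀ y, |f y| ≤ C) :
    |(∑ᶠ g ∈ A, f (g • x)) / (A.ncard : ℝ)| ≤ C := by
  classical
  rcases Set.finite_or_infinite A with hfin | hinfA
  · rcases Set.eq_empty_or_nonempty A with hem | hne
    · rw [hem]
      simpa [finsum_mem_empty] using hC0
    · have hcoe : (↑hfin.toFinset : Set G) = A := hfin.coe_toFinset
      rw [← hcoe, finsum_mem_coe_finset, Set.ncard_coe_finset]
      have hcardpos : 0 < hfin.toFinset.card := by
        rw [Finset.card_pos, ← Finset.coe_nonempty, hcoe]
        exact hne
      have hnn0 : (0 : ℝ) < hfin.toFinset.card := by exact_mod_cast hcardpos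
      rw [abs_div, abs_of_pos hnn0, div_le_iff₀ hnn0]
      calc |∑ g ∈ hfin.toFinset, f (g • x)| ≤ ∑ g ∈ hfin.toFinset, |f (g • x)| :=
            Finset.abs_sum_le_sum_abs _ _
        _ ≤ ∑ _g ∈ hfin.toFinset, C := Finset.sum_le_sum fun g _ => hC _
        _ = C * hfin.toFinset.card := by rw [Finset.sum_const, nsmul_eq_mul, mul_comm]
  · rw [hinfA.ncard]
    simpa using hC0

end PartE
section PartF

variable {G : Type*} [Group G] [Countable G] [MeasurableSpace G] [MeasurableSingletonClass G]

lemma div_le_div_nat {a b : ℝ} (h : a ≤ b) (N : ℕ) : a / (N : ℝ) ≤ b / N := by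
  rcases Nat.eq_zero_or_pos N with h0 | h0
  · simp [h0]
  · have hN : (0 : ℝ) < N := by exact_mod_cast h0
    gcongr

lemma ball_reach_finite (S : Finset G) (M : ℕ) :
    ({g : G | wordLen (S : Set G) g < M} ∩
      ((Submonoid.closure (S : Set G) : Submonoid G) : Set G)).Finite := by
  classical
  have hL : {l : List {x : G // x ∈ S} | l.length < M}.Finite := List.finite_length_lt _ _
  refine Set.Finite.subset (hL.image (fun l => (l.map Subtype.val).prod)) ?_
  rintro g ⟨hglt, hgR⟩
  obtain ⟨l0, hl0S, hl0p⟩ := Submonoid.exists_list_of_mem_closure hgR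
  have hne : {n | ∃ l : List G, l.length = n ∧ (∀ s ∈ l, s ∈ (S : Set G)) ∧ l.prod = g}.Nonempty :=
    ⟨l0.length, l0, rfl, hl0S, hl0p⟩
  obtain ⟨l, hlen, hlS, hlp⟩ := Nat.sInf_mem hne
  refine ⟨l.attach.map (fun s => (⟨s.1, hlS s.1 s.2⟩ : {x : G // x ∈ S})), ?_, ?_⟩
  · simp only [Set.mem_setOf_eq, List.length_map, List.length_attach]
    rw [hlen]
    exact hglt
  · show (List.map Subtype.val (l.attach.map fun s =>
        (⟨s.1, hlS s.1 s.2⟩ : {x : G // x ∈ S}))).prod = g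
    rw [List.map_map]
    have h2 : List.map ((Subtype.val : {x : G // x ∈ S} → G) ∘ fun s : {x // x ∈ l} =>
        (⟨s.1, hlS s.1 s.2⟩ : {x : G // x ∈ S})) l.attach = l := by
      simp [Function.comp]
    rw [h2, hlp]

end PartF
/-- **Theorem (word-metric limits are stationary).** Let `G` be a countable group acting
continuously on a compact metric space `X`, and `μ` a probability measure on `G` whose
support `S` is finite and generates `G`.  If `μ` is evenly distributed (the `μ^{*n}`-mass of a
point depends only on its word length w.r.t. `S`) and the `G`-action converges in word metric
to the space average of a Borel probability measure `ν`, then `ν` is `μ`-stationary: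
`μ * ν = ν`. -/
theorem word_limit_stationary {G : Type*} [Group G] [Countable G] [MeasurableSpace G]
    [MeasurableSingletonClass G]
    {X : Type*} [MetricSpace X] [CompactSpace X] [MeasurableSpace X] [BorelSpace X]
    [MulAction G X] (hcont : ∀ g : G, Continuous fun x : X => g • x)
    (μ : Measure G) [IsProbabilityMeasure μ]
    (S : Finset G) (hsupp : ∀ g : G, μ {g} ≠ 0 ↔ g ∈ S)
    (hgen : Subgroup.closure (S : Set G) = ⊤)
    (heven : ∀ n m : ℕ, ∃ cnm : ENNReal,
      ∀ g : G, wordLen (S : Set G) g = m → convPow μ n {g} = cnm)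
    (ν : Measure X) [IsProbabilityMeasure ν]
    (hword : ∀ f : X → ℝ, Continuous f → ∀ x : X,
      Tendsto
        (fun n : ℕ =>
          (∑ᶠ g ∈ {g : G | wordLen (S : Set G) g = n}, f (g • x)) /
            (({g : G | wordLen (S : Set G) g = n}).ncard : ℝ))
        atTop (𝓝 (∫ y, f y ∂ν))) :
    actConv μ ν = ν := by
  classical
  have hprob : ∀ n, IsProbabilityMeasure (convPow μ n) := convPow_prob μ
  -- X is nonempty
  have hXne : Nonempty X := by
    by_contra h
    have h1 : ν Set.univ = 1 := measure_univ
    rw [Set.univ_eq_empty_iff.mpr (not_nonempty_iff.mp h)] at h1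
    simp at h1
  obtain ⟨x⟩ := hXne
  -- the sub-monoid generated by S is infinite
  have hinf : ((Submonoid.closure (S : Set G) : Submonoid G) : Set G).Infinite := by
    by_contra hni
    rw [Set.not_infinite] at hni
    -- finite submonoid of a group is closed under inverses
    have hinvmem : ∀ y : G, y ∈ Submonoid.closure (S : Set G) →
        y⁻¹ ∈ Submonoid.closure (S : Set G) := by
      intro y hy
      haveI := hni.to_subtype
      have key : ∀ a b : ℕ, a < b → y ^ (a + 1) = y ^ (b + 1) →
          y⁻¹ ∈ Submonoid.closure (S : Set G) := by
        intro a b hab heq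
        have h1 : y ^ (a + 1) * y ^ (b - a) = y ^ (a + 1) := by
          rw [← pow_add, show a + 1 + (b - a) = b + 1 by omega, ← heq]
        have h2 : y ^ (b - a) = 1 :=
          mul_left_cancel (a := y ^ (a + 1)) (h1.trans (mul_one _).symm)
        have h3 : y * y ^ (b - a - 1) = 1 := by
          rw [← pow_succ', show b - a - 1 + 1 = b - a by omega, h2]
        rw [inv_eq_of_mul_eq_one_right h3]
        exact pow_mem hy _
      obtain ⟨a, b, hab, heq⟩ := Finite.exists_ne_map_eq_of_infinite
        (fun n : ℕ => (⟨y ^ (n + 1), pow_mem hy (n + 1)⟩ :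
          ((Submonoid.closure (S : Set G) : Submonoid G) : Set G)))
      have heq' : y ^ (a + 1) = y ^ (b + 1) := congrArg Subtype.val heq
      rcases lt_or_gt_of_ne hab with h | h
      · exact key a b h heq'
      · exact key b a h heq'.symm
    set K : Subgroup G :=
      { toSubmonoid := Submonoid.closure (S : Set G),
        inv_mem' := fun {y} hy => hinvmem y hy } with hK
    have hKall : ∀ g : G, g ∈ Submonoid.closure (S : Set G) := by
      intro g
      have h1 : Subgroup.closure (S : Set G) ≤ K :=
        (Subgroup.closure_le K).mpr (fun s hs => Submonoid.subset_closure hs)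
      have h2 : g ∈ Subgroup.closure (S : Set G) := by rw [hgen]; trivial
      exact h1 h2
    -- word lengths are bounded
    have hGfin : (Set.univ : Set G).Finite :=
      hni.subset (fun g _ => hKall g)
    have hbdd : ∃ M₀ : ℕ, ∀ g : G, wordLen (S : Set G) g ≤ M₀ := by
      have himg : (Set.range (wordLen (S : Set G))).Finite := by
        rw [← Set.image_univ]; exact hGfin.image _
      obtain ⟨M₀, hM₀⟩ := himg.bddAbove
      exact ⟨M₀, fun g => hM₀ ⟨g, rfl⟩⟩
    obtain ⟨M₀, hM₀⟩ := hbdd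
    have h1 := hword (fun _ => (1 : ℝ)) continuous_const x
    have h2 : ∫ _, (1 : ℝ) ∂ν = 1 := by simp
    rw [h2] at h1
    have h3 : Tendsto
        (fun n : ℕ => (∑ᶠ g ∈ {g : G | wordLen (S : Set G) g = n}, (1 : ℝ)) /
          (({g : G | wordLen (S : Set G) g = n}).ncard : ℝ)) atTop (𝓝 0) := by
      refine Tendsto.congr' ?_ tendsto_const_nhds
      filter_upwards [eventually_gt_atTop M₀] with n hn
      have hempty : {g : G | wordLen (S : Set G) g = n} = ∅ := by
        ext g
        simp only [Set.mem_setOf_eq, Set.mem_empty_iff_false, iff_false]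
        intro h
        have := hM₀ g
        omega
      rw [hempty]
      simp
    exact one_ne_zero (tendsto_nhds_unique h1 h3)
  -- the action map is measurable
  have hactm : Measurable (fun p : G × X => p.1 • p.2) := by
    have h1 : Measurable (fun p : X × G => p.2 • p.1) :=
      measurable_from_prod_countable_left (fun g => (hcont g).measurable)
    exact h1.comp measurable_swap
  -- bounds for continuous functions
  have hbound : ∀ f : X → ℝ, Continuous f → ∃ C : ℝ, 0 ≤ C ∧ ∀ y, |f y| ≤ C := by
    intro f hf
    obtain ⟨C, hC⟩ := isCompact_univ.exists_bound_of_continuousOn hf.continuousOn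
    exact ⟨max C 0, le_max_right _ _, fun y =>
      le_trans (hC y (Set.mem_univ y)) (le_max_left _ _)⟩
  -- abbreviations
  set q : ℕ → G → ℝ := fun n g => (convPow μ n {g}).toReal with hqdef
  have hq0 : ∀ n g, 0 ≤ q n g := fun n g => ENNReal.toReal_nonneg
  have hqsum : ∀ n, Summable (q n) := by
    intro n
    apply ENNReal.summable_toReal
    rw [tsum_convPow_eq_one]
    exact ENNReal.one_ne_top
  have hqtsum : ∀ n, ∑' g : G, q n g = 1 := by
    intro n
    rw [hqdef, ← ENNReal.tsum_toReal_eq (fun g => measure_ne_top _ _),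
      tsum_convPow_eq_one]
    simp
  set I : (X → ℝ) → ℕ → ℝ := fun f n => ∑' g : G, q n g * f (g • x) with hIdef
  have hIsummable : ∀ (f : X → ℝ) (C : ℝ), (∀ y, |f y| ≤ C) → ∀ n,
      Summable (fun g : G => q n g * f (g • x)) := by
    intro f C hC n
    refine Summable.of_norm_bounded ((hqsum n).mul_right C) ?_
    intro g
    rw [Real.norm_eq_abs, abs_mul, abs_of_nonneg (hq0 n g)]
    exact mul_le_mul_of_nonneg_left (hC _) (hq0 n g)
  have hIbound : ∀ (f : X → ℝ) (C : ℝ), (∀ y, |f y| ≤ C) → ∀ n, |I f n| ≤ C := by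
    intro f C hC n
    have hs := hIsummable f C hC n
    have hnorm : Summable (fun g : G => ‖q n g * f (g • x)‖) := by
      simpa only [Real.norm_eq_abs] using hs.abs
    have h1 : |I f n| ≤ ∑' g : G, |q n g * f (g • x)| := by
      rw [hIdef]
      simp only
      have h1' := norm_tsum_le_tsum_norm hnorm
      simpa only [Real.norm_eq_abs] using h1' 
    have h2 : ∑' g : G, |q n g * f (g • x)| ≤ ∑' g : G, q n g * C := by
      refine Summable.tsum_le_tsum (fun g => ?_) hs.abs ((hqsum n).mul_right C)
      rw [abs_mul, abs_of_nonneg (hq0 n g)]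
      exact mul_le_mul_of_nonneg_left (hC _) (hq0 n g)
    have h3 : ∑' g : G, q n g * C = C := by
      rw [tsum_mul_right, hqtsum n, one_mul]
    calc |I f n| ≤ _ := h1
      _ ≤ _ := h2
      _ = C := h3
  -- step (a): I f (n+1) = I (averaged f) n
  have hstepI : ∀ (f : X → ℝ) (C : ℝ), (∀ y, |f y| ≤ C) → ∀ n,
      I f (n + 1) = I (fun y => ∑ k ∈ S, (μ {k}).toReal * f (k • y)) n := by
    intro f C hC n
    have hsummk : ∀ k : G,
        Summable (fun g : G => (μ {k}).toReal * q n (k⁻¹ * g) * f (g • x)) := by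
      intro k
      have h1 : Summable (fun g : G => q n (k⁻¹ * g)) := by
        have := (hqsum n).comp_injective (mul_right_injective (k⁻¹ : G))
        simpa [Function.comp_def] using this
      refine Summable.of_norm_bounded
        ((h1.mul_left (μ {k}).toReal).mul_right C) (fun g => ?_)
      rw [Real.norm_eq_abs, abs_mul, abs_mul, abs_of_nonneg ENNReal.toReal_nonneg,
        abs_of_nonneg (hq0 _ _)]
      exact mul_le_mul_of_nonneg_left (hC _) (by positivity)
    have hsummk' : ∀ k : G,
        Summable (fun h : G => (μ {k}).toReal * q n h * f ((k * h) • x)) := by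
      intro k
      refine Summable.of_norm_bounded
        (((hqsum n).mul_left (μ {k}).toReal).mul_right C) (fun h => ?_)
      rw [Real.norm_eq_abs, abs_mul, abs_mul, abs_of_nonneg ENNReal.toReal_nonneg,
        abs_of_nonneg (hq0 _ _)]
      exact mul_le_mul_of_nonneg_left (hC _) (by positivity)
    rw [hIdef]
    simp only
    calc ∑' g : G, q (n + 1) g * f (g • x)
        = ∑' g : G, ∑ k ∈ S, (μ {k}).toReal * q n (k⁻¹ * g) * f (g • x) := by
          refine tsum_congr fun g => ?_
          rw [show q (n + 1) g = ∑ k ∈ S, (μ {k}).toReal * q n (k⁻¹ * g) from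
            convPow_succ_real_left μ S hsupp n g, Finset.sum_mul]
      _ = ∑ k ∈ S, ∑' g : G, (μ {k}).toReal * q n (k⁻¹ * g) * f (g • x) :=
          Summable.tsum_finsetSum (fun k _ => hsummk k)
      _ = ∑ k ∈ S, ∑' h : G, (μ {k}).toReal * q n h * f ((k * h) • x) := by
          refine Finset.sum_congr rfl fun k _ => ?_
          refine ((Equiv.tsum_eq (Equiv.mulLeft k)
            (fun g => (μ {k}).toReal * q n (k⁻¹ * g) * f (g • x))).symm).trans ?_
          refine tsum_congr fun h => ?_
          simp [Equiv.coe_mulLeft, inv_mul_cancel_left]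
      _ = ∑' h : G, ∑ k ∈ S, (μ {k}).toReal * q n h * f ((k * h) • x) :=
          (Summable.tsum_finsetSum (fun k _ => hsummk' k)).symm
      _ = ∑' h : G, q n h * ∑ k ∈ S, (μ {k}).toReal * f (k • (h • x)) := by
          refine tsum_congr fun h => ?_
          rw [Finset.mul_sum]
          refine Finset.sum_congr rfl fun k _ => ?_
          rw [mul_smul]
          ring
  -- step (b): Cesàro averages of I f n converge to ∫ f dν
  have hJ : ∀ f : X → ℝ, Continuous f →
      Tendsto (fun N : ℕ => (∑ n ∈ Finset.range N, I f n) / N) atTop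
        (𝓝 (∫ y, f y ∂ν)) := by
    intro f hf
    obtain ⟨C, hC0, hC⟩ := hbound f hf
    set T := ∫ y, f y ∂ν with hT
    set Cb : ℝ := C + |T| with hCb
    have hCb0 : 0 ≤ Cb := by positivity
    set sph : ℕ → Set G := fun m => {g : G | wordLen (S : Set G) g = m} with hsph
    set av : ℕ → ℝ := fun m => (∑ᶠ g ∈ sph m, f (g • x)) / ((sph m).ncard : ℝ) with havdef
    have ha : Tendsto av atTop (𝓝 T) := hword f hf x
    set w : ℕ → ℕ → ℝ := fun n m => (convPow μ n (sph m)).toReal with hwdef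
    set sfib : ℕ → ℕ → ℝ :=
      fun n m => ∑' g : sph m, q n (g : G) * f ((g : G) • x) with hsdef
    have hw0 : ∀ n m, 0 ≤ w n m := fun n m => ENNReal.toReal_nonneg
    -- sigma decomposition
    let esig : G ≃ Σ m : ℕ, sph m :=
      { toFun := fun g => ⟨wordLen (S : Set G) g, ⟨g, rfl⟩⟩
        invFun := fun p => (p.2 : G)
        left_inv := fun g => rfl
        right_inv := by
          rintro ⟨m, g, hg⟩
          have hg' : wordLen (S : Set G) g = m := hg
          subst hg'
          rfl }
    have hsigsum : ∀ n,
        Summable (fun p : Σ m : ℕ, sph m => q n (p.2 : G) * f ((p.2 : G) • x)) := by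
      intro n
      have h0 : Summable ((fun p : Σ m : ℕ, sph m => q n (p.2 : G) * f ((p.2 : G) • x))
          ∘ esig) := hIsummable f C hC n
      exact (Equiv.summable_iff esig).mp h0
    have hsigma : ∀ n, I f n = ∑' m, sfib n m := by
      intro n
      have e1 : I f n = ∑' g : G,
          (fun p : Σ m : ℕ, sph m => q n (p.2 : G) * f ((p.2 : G) • x)) (esig g) := rfl
      rw [e1, Equiv.tsum_eq esig
        (fun p : Σ m : ℕ, sph m => q n (p.2 : G) * f ((p.2 : G) • x))]
      exact Summable.tsum_sigma' (fun m => (hsigsum n).sigma_factor m) (hsigsum n)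
    have hsfibsummable : ∀ n, Summable (sfib n) := fun n => (hsigsum n).sigma
    -- total mass of spheres
    have hwtsumE : ∀ n, ∑' m, convPow μ n (sph m) = 1 := by
      intro n
      haveI := hprob n
      rw [← measure_iUnion ?_ (fun m => (Set.to_countable _).measurableSet)]
      · rw [show (⋃ m, sph m) = Set.univ from ?_, measure_univ]
        ext g
        simp only [Set.mem_iUnion, Set.mem_univ, iff_true]
        exact ⟨wordLen (S : Set G) g, rfl⟩
      · intro m m' hmm
        simp only [Function.onFun]
        rw [Set.disjoint_left]
        intro g hg hg'
        exact hmm ((hg : wordLen (S : Set G) g = m).symm.trans hg')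
    have hwsum : ∀ n, Summable (w n) := fun n =>
      ENNReal.summable_toReal (by rw [hwtsumE n]; simp)
    have hwtsum : ∀ n, ∑' m, w n m = 1 := by
      intro n
      rw [hwdef, ← ENNReal.tsum_toReal_eq (fun m => measure_ne_top _ _), hwtsumE n]
      simp
    -- fiber bounds
    have hfiber : ∀ n m, |sfib n m - w n m * T| ≤ w n m * |av m - T| := by
      intro n m
      obtain ⟨c, hc⟩ := heven n m
      exact fiber_bound (convPow μ n) (sph m) c (fun g hg => hc g hg) f x T
    have hav_bound : ∀ m, |av m - T| ≤ Cb := by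
      intro m
      have h1 : |av m| ≤ C := avg_bound (sph m) f x C hC0 hC
      rw [sub_eq_add_neg]
      refine (abs_add_le _ _).trans ?_
      rw [abs_neg, hCb]
      linarith
    -- per-n estimate
    have hIest : ∀ ε : ℝ, 0 < ε → ∀ M : ℕ, (∀ m, M ≤ m → |av m - T| ≤ ε) →
        ∀ n, |I f n - T| ≤ Cb * (∑ m ∈ Finset.range M, w n m) + ε := by
      intro ε hε M hM n
      have hd : ∀ m, |sfib n m - w n m * T| ≤ w n m * Cb :=
        fun m => (hfiber n m).trans (mul_le_mul_of_nonneg_left (hav_bound m) (hw0 n m))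
      have hdsum : Summable (fun m => |sfib n m - w n m * T|) :=
        Summable.of_nonneg_of_le (fun m => abs_nonneg _) hd ((hwsum n).mul_right Cb)
      have h1 : I f n - T = ∑' m, (sfib n m - w n m * T) := by
        calc I f n - T = (∑' m, sfib n m) - ∑' m, w n m * T := by
              rw [tsum_mul_right, hwtsum n, one_mul, hsigma n]
          _ = ∑' m, (sfib n m - w n m * T) :=
              (Summable.tsum_sub (hsfibsummable n) ((hwsum n).mul_right T)).symm
      have hdnorm : Summable (fun m => ‖sfib n m - w n m * T‖) := by
        simpa only [Real.norm_eq_abs] using hdsum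
      have h2 : |I f n - T| ≤ ∑' m, |sfib n m - w n m * T| := by
        rw [h1]
        have h2' := norm_tsum_le_tsum_norm hdnorm
        simpa only [Real.norm_eq_abs] using h2' 
      have h3 : ∑' m, |sfib n m - w n m * T|
          = (∑ m ∈ Finset.range M, |sfib n m - w n m * T|)
            + ∑' m : ℕ, |sfib n (m + M) - w n (m + M) * T| :=
        (Summable.sum_add_tsum_nat_add M hdsum).symm
      have h4 : (∑ m ∈ Finset.range M, |sfib n m - w n m * T|)
          ≤ Cb * ∑ m ∈ Finset.range M, w n m := by
        rw [Finset.mul_sum]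
        exact Finset.sum_le_sum fun m _ => (hd m).trans_eq (mul_comm _ _)
      have hsummable2 : Summable (fun m : ℕ => w n (m + M)) := by
        have := (hwsum n).comp_injective (add_left_injective M)
        simpa [Function.comp_def] using this
      have h5 : (∑' m : ℕ, |sfib n (m + M) - w n (m + M) * T|) ≤ ε := by
        have hle : ∀ m : ℕ, |sfib n (m + M) - w n (m + M) * T| ≤ w n (m + M) * ε :=
          fun m => (hfiber n (m + M)).trans
            (mul_le_mul_of_nonneg_left (hM _ (Nat.le_add_left M m)) (hw0 _ _))
        have hdsum2 : Summable (fun m : ℕ => |sfib n (m + M) - w n (m + M) * T|) := by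
          have := hdsum.comp_injective (add_left_injective M)
          simpa [Function.comp_def] using this
        calc ∑' m : ℕ, |sfib n (m + M) - w n (m + M) * T|
            ≤ ∑' m : ℕ, w n (m + M) * ε :=
              Summable.tsum_le_tsum hle hdsum2 (hsummable2.mul_right ε)
          _ = (∑' m : ℕ, w n (m + M)) * ε := tsum_mul_right
          _ ≤ 1 * ε := by
              refine mul_le_mul_of_nonneg_right ?_ hε.le
              have hsplit := Summable.sum_add_tsum_nat_add M (hwsum n)
              rw [hwtsum n] at hsplit
              have hnn : 0 ≤ ∑ m ∈ Finset.range M, w n m :=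
                Finset.sum_nonneg fun m _ => hw0 n m
              linarith
          _ = ε := one_mul ε
      calc |I f n - T| ≤ _ := h2
        _ = _ := h3
        _ ≤ Cb * (∑ m ∈ Finset.range M, w n m) + ε := add_le_add h4 h5
    -- Cesàro decay of the mass of balls
    have hball : ∀ M : ℕ, Tendsto (fun N : ℕ =>
        (∑ n ∈ Finset.range N, ∑ m ∈ Finset.range M, w n m) / N) atTop (𝓝 0) := by
      intro M
      have hBfin := ball_reach_finite S M
      set Bfin := hBfin.toFinset with hBdef
      have hwle : ∀ n, ∑ m ∈ Finset.range M, w n m ≤ ∑ g ∈ Bfin, q n g := by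
        intro n
        haveI := hprob n
        have hwset : ∑ m ∈ Finset.range M, w n m
            = (convPow μ n (⋃ m ∈ Finset.range M, sph m)).toReal := by
          rw [measure_biUnion_finset ?_ (fun m _ => (Set.to_countable _).measurableSet),
            ENNReal.toReal_sum (fun m _ => measure_ne_top _ _)]
          intro m _ m' _ hmm'
          rw [Function.onFun, Set.disjoint_left]
          intro g hg hg'
          exact hmm' ((hg : wordLen (S : Set G) g = m).symm.trans hg')
        have hsub : (⋃ m ∈ Finset.range M, sph m) ⊆ {g : G | wordLen (S : Set G) g < M} := by
          intro g hg
          simp only [Set.mem_iUnion] at hg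
          obtain ⟨m, hm, hgm⟩ := hg
          have : wordLen (S : Set G) g = m := hgm
          simp only [Set.mem_setOf_eq, this]
          exact Finset.mem_range.mp hm
        set Rset : Set G := ((Submonoid.closure (S : Set G) : Submonoid G) : Set G)
          with hRsetdef
        have hRnull : convPow μ n Rsetᶜ = 0 := by
          rw [measure_eq_tsum']
          have hz : ∀ g : (Rsetᶜ : Set G),
              convPow μ n {(g : G)} = 0 := by
            intro g
            by_contra h0
            exact g.2 (convPow_mem_closure μ S hsupp n _ h0)
          rw [tsum_congr hz]
          simp
        have hmeasle : convPow μ n (⋃ m ∈ Finset.range M, sph m)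
            ≤ convPow μ n (↑Bfin : Set G) := by
          have hstep1 : convPow μ n (⋃ m ∈ Finset.range M, sph m)
              ≤ convPow μ n ({g : G | wordLen (S : Set G) g < M} ∩ Rset)
                + convPow μ n Rsetᶜ := by
            refine le_trans (measure_mono ?_) (measure_union_le _ _)
            intro g hg
            by_cases hR : g ∈ Rset
            · exact Or.inl ⟨hsub hg, hR⟩
            · exact Or.inr hR
          rw [hRnull, add_zero] at hstep1
          refine hstep1.trans (le_of_eq ?_)
          congr 1
          rw [hBdef, Set.Finite.coe_toFinset]
        have h6 := ENNReal.toReal_mono (measure_ne_top _ _) hmeasle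
        rw [hwset]
        refine le_trans h6 ?_
        rw [finset_measure_eq_sum, ENNReal.toReal_sum (fun g _ => measure_ne_top _ _)]
      have hcesaro : Tendsto (fun N : ℕ =>
          ∑ g ∈ Bfin, ((∑ n ∈ Finset.range N, q n g) / N)) atTop (𝓝 0) := by
        have h7 := tendsto_finset_sum Bfin
          (fun g (_ : g ∈ Bfin) => cesaro_vanish μ S hsupp hinf g)
        simpa using h7
      refine squeeze_zero (fun N => ?_) (fun N => ?_) hcesaro
      · refine div_nonneg (Finset.sum_nonneg fun n _ => Finset.sum_nonneg fun m _ => hw0 n m)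
          (Nat.cast_nonneg N)
      · rw [show (∑ g ∈ Bfin, ((∑ n ∈ Finset.range N, q n g) / N))
            = (∑ n ∈ Finset.range N, ∑ g ∈ Bfin, q n g) / N from by
          rw [← Finset.sum_div, Finset.sum_comm]]
        exact div_le_div_nat (Finset.sum_le_sum fun n _ => hwle n) N
    -- conclude (b) via ε-argument
    rw [Metric.tendsto_atTop]
    intro ε hε
    have hε4 : 0 < ε / 4 := by linarith
    obtain ⟨M, hM⟩ := (Metric.tendsto_atTop.mp ha (ε / 4) hε4)
    have hM' : ∀ m, M ≤ m → |av m - T| ≤ ε / 4 := by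
      intro m hm
      have := hM m hm
      rw [Real.dist_eq] at this
      exact this.le
    have hIe := hIest (ε / 4) hε4 M hM'
    have htiny : 0 < ε / (4 * (Cb + 1)) := by positivity
    obtain ⟨N₀, hN₀⟩ := (Metric.tendsto_atTop.mp (hball M) (ε / (4 * (Cb + 1))) htiny)
    refine ⟨max N₀ 1, fun N hN => ?_⟩
    have hN1 : 1 ≤ N := le_trans (le_max_right _ _) hN
    have hNpos : (0 : ℝ) < N := by exact_mod_cast hN1
    have hβ := hN₀ N (le_trans (le_max_left _ _) hN)
    rw [Real.dist_eq] at hβ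
    have hβ0 : 0 ≤ (∑ n ∈ Finset.range N, ∑ m ∈ Finset.range M, w n m) / N :=
      div_nonneg (Finset.sum_nonneg fun n _ => Finset.sum_nonneg fun m _ => hw0 n m)
        (Nat.cast_nonneg N)
    rw [Real.dist_eq]
    have hJb : |(∑ n ∈ Finset.range N, I f n) / N - T|
        ≤ (∑ n ∈ Finset.range N, |I f n - T|) / N := by
      rw [show (∑ n ∈ Finset.range N, I f n) / N - T
          = (∑ n ∈ Finset.range N, (I f n - T)) / N from by
        rw [Finset.sum_sub_distrib, Finset.sum_const, Finset.card_range, nsmul_eq_mul,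
          sub_div, mul_div_cancel_left₀ T (ne_of_gt hNpos)]]
      rw [abs_div, abs_of_pos hNpos]
      exact div_le_div_nat (Finset.abs_sum_le_sum_abs _ _) N
    have hstep : ∑ n ∈ Finset.range N, |I f n - T|
        ≤ Cb * (∑ n ∈ Finset.range N, ∑ m ∈ Finset.range M, w n m) + N * (ε / 4) := by
      calc ∑ n ∈ Finset.range N, |I f n - T|
          ≤ ∑ n ∈ Finset.range N, (Cb * (∑ m ∈ Finset.range M, w n m) + ε / 4) :=
            Finset.sum_le_sum fun n _ => hIe n
        _ = Cb * (∑ n ∈ Finset.range N, ∑ m ∈ Finset.range M, w n m) + N * (ε / 4) := by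
            rw [Finset.sum_add_distrib, ← Finset.mul_sum, Finset.sum_const,
              Finset.card_range, nsmul_eq_mul]
    have hWN : (∑ n ∈ Finset.range N, ∑ m ∈ Finset.range M, w n m) / N
        < ε / (4 * (Cb + 1)) := by
      refine lt_of_le_of_lt (le_abs_self _) ?_
      simpa using hβ
    have hdiv : (∑ n ∈ Finset.range N, |I f n - T|) / N
        ≤ Cb * ((∑ n ∈ Finset.range N, ∑ m ∈ Finset.range M, w n m) / N) + ε / 4 := by
      refine (div_le_div_nat hstep N).trans (le_of_eq ?_)
      rw [add_div, mul_div_assoc, mul_div_cancel_left₀ (ε / 4) (ne_of_gt hNpos)]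
    have hCbb : Cb * ((∑ n ∈ Finset.range N, ∑ m ∈ Finset.range M, w n m) / N) < ε / 4 := by
      have h9 : Cb * ((∑ n ∈ Finset.range N, ∑ m ∈ Finset.range M, w n m) / N)
          ≤ Cb * (ε / (4 * (Cb + 1))) := mul_le_mul_of_nonneg_left hWN.le hCb0
      have h10 : Cb * (ε / (4 * (Cb + 1))) < ε / 4 := by
        have hDe : ε / (4 * (Cb + 1)) * (4 * (Cb + 1)) = ε :=
          div_mul_cancel₀ _ (by positivity)
        nlinarith [htiny, hCb0]
      linarith
    calc |(∑ n ∈ Finset.range N, I f n) / N - T| ≤ _ := hJb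
      _ ≤ Cb * ((∑ n ∈ Finset.range N, ∑ m ∈ Finset.range M, w n m) / N) + ε / 4 := hdiv
      _ < ε / 4 + ε / 4 := by linarith
      _ < ε := by linarith
  -- step (c): integrating the averaged function against ν gives the same answer
  have hstat : ∀ f : X → ℝ, Continuous f →
      ∫ y, (∑ k ∈ S, (μ {k}).toReal * f (k • y)) ∂ν = ∫ y, f y ∂ν := by
    intro f hf
    obtain ⟨C, hC0, hC⟩ := hbound f hf
    have hFcont : Continuous fun y : X => ∑ k ∈ S, (μ {k}).toReal * f (k • y) :=
      continuous_finset_sum _ fun k _ => continuous_const.mul (hf.comp (hcont k))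
    have hJF := hJ _ hFcont
    have hJf := hJ f hf
    have hshift : ∀ N : ℕ,
        (∑ n ∈ Finset.range N, I (fun y => ∑ k ∈ S, (μ {k}).toReal * f (k • y)) n)
          = ∑ n ∈ Finset.range N, I f n + I f N - I f 0 := by
      intro N
      have h1 : ∀ n, I (fun y => ∑ k ∈ S, (μ {k}).toReal * f (k • y)) n = I f (n + 1) :=
        fun n => (hstepI f C hC n).symm
      rw [Finset.sum_congr rfl fun n _ => h1 n]
      have h2 := Finset.sum_range_succ' (fun n => I f n) N
      have h3 := Finset.sum_range_succ (fun n => I f n) N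
      linarith
    have hzero : Tendsto (fun N : ℕ => (I f N - I f 0) / N) atTop (𝓝 0) := by
      refine squeeze_zero_norm (fun N => ?_) (tendsto_const_div_atTop_nhds_zero_nat (2 * C))
      rcases Nat.eq_zero_or_pos N with h | h
      · simp [h]
      · have hNpos : (0 : ℝ) < N := by exact_mod_cast h
        have hb : |I f N - I f 0| ≤ 2 * C := by
          have h1 := hIbound f C hC N
          have h2 := hIbound f C hC 0
          rw [abs_le] at h1 h2 ⊢
          constructor <;> linarith [h1.1, h1.2, h2.1, h2.2]
        rw [Real.norm_eq_abs, abs_div, Nat.abs_cast]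
        gcongr
    have hJF' : Tendsto (fun N : ℕ => (∑ n ∈ Finset.range N, I f n) / N
        + (I f N - I f 0) / N) atTop
        (𝓝 (∫ y, (∑ k ∈ S, (μ {k}).toReal * f (k • y)) ∂ν)) := by
      refine Tendsto.congr (fun N => ?_) hJF
      rw [hshift N, show ∑ n ∈ Finset.range N, I f n + I f N - I f 0
          = ∑ n ∈ Finset.range N, I f n + (I f N - I f 0) from by ring, add_div]
    have hJf' := hJf.add hzero
    rw [add_zero] at hJf'
    exact tendsto_nhds_unique hJF' hJf'
  -- step (d): compute the integral against actConv μ ν and conclude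
  have hInt : ∀ f : X → ℝ, Continuous f →
      ∫ y, f y ∂(actConv μ ν) = ∫ y, f y ∂ν := by
    intro f hf
    obtain ⟨C, hC0, hC⟩ := hbound f hf
    rw [show actConv μ ν = Measure.map (fun p : G × X => p.1 • p.2) (μ.prod ν) from rfl,
      integral_map hactm.aemeasurable hf.aestronglyMeasurable]
    have hint : Integrable (fun p : G × X => f (p.1 • p.2)) (μ.prod ν) :=
      (integrable_const C).mono' ((hf.measurable.comp hactm).aestronglyMeasurable)
        (Filter.Eventually.of_forall fun p => by
          simpa [Real.norm_eq_abs] using hC (p.1 • p.2))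
    rw [MeasureTheory.integral_prod _ hint]
    have hintk : ∀ k : G, Integrable (fun y => f (k • y)) ν := fun k =>
      (integrable_const C).mono' ((hf.comp (hcont k)).aestronglyMeasurable)
        (Filter.Eventually.of_forall fun y => by
          simpa [Real.norm_eq_abs] using hC (k • y))
    have hintg : Integrable (fun g : G => ∫ y, f (g • y) ∂ν) μ := by
      refine (integrable_const C).mono' ((measurable_discrete' _).aestronglyMeasurable) ?_
      refine Filter.Eventually.of_forall fun g => ?_
      calc ‖∫ y, f (g • y) ∂ν‖ ≤ C * (ν Set.univ).toReal :=
            norm_integral_le_of_norm_le_const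
              (Filter.Eventually.of_forall fun y => by
                simpa [Real.norm_eq_abs] using hC (g • y))
        _ = C := by simp
    rw [integral_countable' hintg, tsum_eq_sum (s := S) (fun g hg => by
      have h0 : μ {g} = 0 := by
        by_contra h
        exact hg ((hsupp g).mp h)
      rw [measureReal_def, h0]
      simp)]
    simp only [measureReal_def]
    rw [← hstat f hf]
    have hterm : ∀ k ∈ S, (μ {k}).toReal • ∫ y, f (k • y) ∂ν
        = ∫ y, (μ {k}).toReal * f (k • y) ∂ν := fun k _ => by
      rw [smul_eq_mul, ← integral_const_mul]
    rw [Finset.sum_congr rfl hterm,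
      ← integral_finset_sum S (fun k _ => (hintk k).const_mul ((μ {k}).toReal))]
  -- conclude: the two measures integrate all bounded continuous functions equally
  haveI : IsProbabilityMeasure (actConv μ ν) := by
    rw [show actConv μ ν = Measure.map (fun p : G × X => p.1 • p.2) (μ.prod ν) from rfl]
    exact Measure.isProbabilityMeasure_map hactm.aemeasurable
  refine ext_of_forall_lintegral_eq_of_IsFiniteMeasure ?_
  intro fb
  have hcont' : Continuous fun y : X => ((fb y : NNReal) : ℝ) :=
    NNReal.continuous_coe.comp fb.continuous
  have h1 : ∀ (ρ : Measure X), IsProbabilityMeasure ρ →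
      ∫⁻ y, ((fb y : NNReal) : ENNReal) ∂ρ = ENNReal.ofReal (∫ y, ((fb y : NNReal) : ℝ) ∂ρ) := by
    intro ρ hρ
    haveI := hρ
    obtain ⟨C, hC0, hC⟩ := hbound _ hcont'
    have hint2 : Integrable (fun y => ((fb y : NNReal) : ℝ)) ρ :=
      (integrable_const C).mono' hcont'.aestronglyMeasurable
        (Filter.Eventually.of_forall fun y => by
          simpa [Real.norm_eq_abs] using hC y)
    rw [MeasureTheory.ofReal_integral_eq_lintegral_ofReal hint2
      (Filter.Eventually.of_forall fun y => NNReal.coe_nonneg _)]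
    refine lintegral_congr fun y => ?_
    exact ENNReal.ofReal_coe_nnreal.symm
  rw [h1 _ inferInstance, h1 _ inferInstance, hInt _ hcont']
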